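/- Let C be an additive category, A and B chain complexes in C, and X a homotopically isolated summand of A with respect to B. If the space of chain maps from A to B modulo homotopy is one-dimensional over a field k, and φ, ψ: A → B are chain maps that agree and are nonzero on X, then φ and ψ are homotopic. -/
import Mathlib


open CategoryTheory

/-- If the space of chain maps A → B modulo homotopy is one-dimensional over a field k, X is a
homotopically isolated summand of A with respect to B, and φ, ψ : A → B agree and are nonzero
on X, then φ and ψ are homotopic. -/
theorem homotopically_isolated_agreement_implies_homotopic
    {k : Type*} [Field k] {V : Type*} [Category V] [Preadditive V] [Linear k V]
    {A B : HomologicalComplex V (ComplexShape.down ℤ)} (n : ℤ)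
    (X : V) (ι : X ⟶ A.X n) (r : A.X n ⟶ X) (hr : ι ≫ r = 𝟙 X)
    (hiso : ∀ hom : ∀ i j, A.X i ⟶ B.X j, ι ≫ (dNext n hom + prevD n hom) = 0)
    (hone : ∀ f g : A ⟶ B, ∃ c d : k, ¬(c = 0 ∧ d = 0) ∧ Nonempty (Homotopy (c • f) (d • g)))
    (hnontriv : ∃ f : A ⟶ B, ¬Nonempty (Homotopy f 0))
    (φ ψ : A ⟶ B)
    (hagree : ι ≫ φ.f n = ι ≫ ψ.f n)
    (hnonzero : ι ≫ φ.f n ≠ 0) :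
    Nonempty (Homotopy φ ψ) := by
  obtain ⟨c, d, hcd, ⟨H⟩⟩ := hone φ ψ
  have comm := H.comm n
  have h1 : c • (ι ≫ φ.f n) = d • (ι ≫ φ.f n) := by
    have := congrArg (fun m => ι ≫ m) comm
    simp only [HomologicalComplex.smul_f_apply, Preadditive.comp_add, Linear.comp_smul] at this
    rw [← Preadditive.comp_add, hiso H.hom] at this
    simpa [hagree] using this
  have hc : c = d := by
    by_contra hne
    have hsub : (c - d) • (ι ≫ φ.f n) = 0 := by
      rw [sub_smul, h1, sub_self]
    have := congrArg (fun m => (c - d)⁻¹ • m) hsub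
    simp [smul_smul, inv_mul_cancel₀ (sub_ne_zero_of_ne hne)] at this
    exact hnonzero this
  subst hc
  have hc0 : c ≠ 0 := fun h => hcd ⟨h, h⟩
  refine ⟨{ hom := fun i j => c⁻¹ • H.hom i j,
            zero := fun i j h => by simp [H.zero i j h],
            comm := fun i => ?_ }⟩
  have hcomm := H.comm i
  simp only [HomologicalComplex.smul_f_apply] at hcomm
  have h2 := congrArg (fun m => c⁻¹ • m) hcomm
  simp only [smul_add, smul_smul, inv_mul_cancel₀ hc0, one_smul] at h2
  rw [h2]
  congr 1
  congr 1
  · simp [dNext, Linear.comp_smul]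
  · simp [prevD, Linear.smul_comp]
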